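/- In any double algebra, every element $l \in L$ lies in the set $\mathcal{I}_R := \{x \in A \mid x\star a = x\star\Phi_B\Phi_R(a) \text{ for all } a\}$, and every element of $\mathcal{I}_R$ commutes vertically with every element of $R$: $l'\circ\Phi_R(a) = \Phi_R(a)\circ l'$ for all $l' \in \mathcal{I}_R$ and $a \in A$. -/
import Mathlib


/-- A double algebra over a commutative ring `k`: a `k`-module `A` with two
associative unital bilinear multiplications, the vertical `vmul` (written `∘` in the
paper, unit `e`) and the horizontal `hmul` (written `⋆`, unit `i`), satisfying
axioms A1–A8 of Szlachányi's Definition 1.1. -/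
structure DoubleAlgebra (k : Type*) (A : Type*) [CommRing k] [AddCommGroup A]
    [Module k A] where
  vmul : A →ₗ[k] A →ₗ[k] A
  hmul : A →ₗ[k] A →ₗ[k] A
  e : A
  i : A
  vmul_assoc : ∀ a b c, vmul (vmul a b) c = vmul a (vmul b c)
  hmul_assoc : ∀ a b c, hmul (hmul a b) c = hmul a (hmul b c)
  vmul_e : ∀ a, vmul a e = a
  e_vmul : ∀ a, vmul e a = a
  hmul_i : ∀ a, hmul a i = a
  i_hmul : ∀ a, hmul i a = a
  A1 : ∀ a b, vmul (hmul a e) b = hmul (vmul (hmul a e) i) b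
  A2 : ∀ a b, vmul a (hmul b e) = hmul (vmul i (hmul b e)) a
  A3 : ∀ a b, hmul (vmul a i) b = vmul (hmul (vmul a i) e) b
  A4 : ∀ a b, hmul a (vmul b i) = vmul (hmul e (vmul b i)) a
  A5 : ∀ a b, vmul a (hmul e b) = hmul a (vmul i (hmul e b))
  A6 : ∀ a b, vmul (hmul e a) b = hmul b (vmul (hmul e a) i)
  A7 : ∀ a b, hmul a (vmul i b) = vmul a (hmul e (vmul i b))
  A8 : ∀ a b, hmul (vmul i a) b = vmul b (hmul (vmul i a) e)

variable {k A : Type*} [CommRing k] [AddCommGroup A] [Module k A]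

/-- `Φ_L(a) = a ⋆ e`. -/
def DoubleAlgebra.PhiL (D : DoubleAlgebra k A) (a : A) : A := D.hmul a D.e
/-- `Φ_R(a) = e ⋆ a`. -/
def DoubleAlgebra.PhiR (D : DoubleAlgebra k A) (a : A) : A := D.hmul D.e a
/-- `Φ_B(a) = a ∘ i`. -/
def DoubleAlgebra.PhiB (D : DoubleAlgebra k A) (a : A) : A := D.vmul a D.i
/-- `Φ_T(a) = i ∘ a`. -/
def DoubleAlgebra.PhiT (D : DoubleAlgebra k A) (a : A) : A := D.vmul D.i a

/-- `L ⊆ 𝓘_R ⊆ Cnt_V(R)` where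
`𝓘_R = {x | x ⋆ a = x ⋆ Φ_BΦ_R(a) for all a}`. -/
theorem stmt7 (D : DoubleAlgebra k A) :
    (∀ l ∈ Set.range D.PhiL, ∀ a, D.hmul l a = D.hmul l (D.PhiB (D.PhiR a))) ∧
    (∀ l' : A, (∀ a, D.hmul l' a = D.hmul l' (D.PhiB (D.PhiR a))) →
      ∀ a, D.vmul l' (D.PhiR a) = D.vmul (D.PhiR a) l') := by
  have r1 : ∀ a, D.hmul D.e (D.vmul (D.hmul D.e a) D.i) = D.hmul D.e a := by
    intro a; have h := D.A6 a D.e; rw [D.vmul_e] at h; exact h.symm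
  have r2 : ∀ a, D.hmul D.e (D.vmul D.i (D.hmul D.e a)) = D.hmul D.e a := by
    intro a; have h := D.A5 D.e a; rw [D.e_vmul] at h; exact h.symm
  constructor
  · rintro l ⟨b, rfl⟩ a
    simp only [DoubleAlgebra.PhiL, DoubleAlgebra.PhiB, DoubleAlgebra.PhiR]
    rw [D.hmul_assoc, D.hmul_assoc, r1]
  · intro l' h a
    simp only [DoubleAlgebra.PhiB, DoubleAlgebra.PhiR] at *
    have key : D.vmul (D.hmul D.e a) l' = D.hmul l' a := by
      have h4 := D.A4 l' (D.hmul D.e a)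
      rw [r1] at h4
      rw [← h4, ← h a]
    rw [key, D.A5, h (D.vmul D.i (D.hmul D.e a)), r2, ← h a]
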